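/- With the same vertex-scaling setup, ∂α_i/∂u_i < 0: the angle at a vertex of a hyperbolic triangle strictly decreases as the conformal factor at that vertex increases. -/

import Mathlib

open Real

/-- Vertex-scaled edge length: `l` with `sinh(l/2) = sinh(d/2)·e^(ur+us)`. -/
noncomputable def vsLen (d ur us : ℝ) : ℝ :=
  2 * Real.arsinh (Real.sinh (d / 2) * Real.exp (ur + us))

/-- The triangle inequalities for the vertex-scaled lengths. -/
def vsAdm (dij dik djk ui uj uk : ℝ) : Prop :=
  vsLen djk uj uk < vsLen dik ui uk + vsLen dij ui uj ∧
  vsLen dik ui uk < vsLen djk uj uk + vsLen dij ui uj ∧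
  vsLen dij ui uj < vsLen djk uj uk + vsLen dik ui uk

noncomputable def cosAng (P Q W : ℝ) : ℝ :=
  ((1 + 2 * P ^ 2) * (1 + 2 * Q ^ 2) - W) /
    ((2 * P * Real.sqrt (1 + P ^ 2)) * (2 * Q * Real.sqrt (1 + Q ^ 2)))

lemma key_ineq (A B C s : ℝ) (hA : 1 < A) (hB : 1 < B) (hC1 : 1 ≤ C) (hs : 0 < s)
    (hs2 : s ^ 2 = (A ^ 2 - 1) * (B ^ 2 - 1)) (hC : A * B - s < C) :
    0 < 2 * ((A - 1) * B + (B - 1) * A) * ((A + 1) * (B + 1))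
        - (A * B - C) * (2 * (A + 1) * (B + 1) + (A - 1) * (B + 1) + (B - 1) * (A + 1)) := by
  have hAB1 : (0:ℝ) < A * B - 1 := by nlinarith
  have hABs : (0:ℝ) < A * B - 1 + s := by linarith
  have hD1 : 1 ≤ A * B - s := by nlinarith [sq_nonneg (A - B), mul_pos hAB1 hs, hABs, hs2]
  have hfac1 : 0 < (C - (A * B - s)) * (2 * (A * B) + A + B) := by
    apply mul_pos (by linarith) (by nlinarith)
  have hfac2 : 0 ≤ ((A * B - s) - 1) * ((A * B - s) + 1 + A + B) := by
    apply mul_nonneg (by linarith) (by nlinarith)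
  nlinarith [hfac1, hfac2]

lemma core (p q W x : ℝ) (hp : 0 < p) (hq : 0 < q) (hW1 : 1 ≤ W)
    (htri : (1 + 2 * (p * Real.exp x) ^ 2) * (1 + 2 * (q * Real.exp x) ^ 2)
        - (2 * (p * Real.exp x) * Real.sqrt (1 + (p * Real.exp x) ^ 2)) *
          (2 * (q * Real.exp x) * Real.sqrt (1 + (q * Real.exp x) ^ 2)) < W)
    (hsq : (cosAng (p * Real.exp x) (q * Real.exp x) W) ^ 2 < 1) :
    deriv (fun t => Real.arccos (cosAng (p * Real.exp t) (q * Real.exp t) W)) x < 0 := by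
  have hy : 0 < p * Real.exp x := by positivity
  have hz : 0 < q * Real.exp x := by positivity
  have hra : (0:ℝ) < Real.sqrt (1 + (p * Real.exp x) ^ 2) := by positivity
  have hrb : (0:ℝ) < Real.sqrt (1 + (q * Real.exp x) ^ 2) := by positivity
  have hra2 : Real.sqrt (1 + (p * Real.exp x) ^ 2) ^ 2 = 1 + (p * Real.exp x) ^ 2 :=
    Real.sq_sqrt (by positivity)
  have hrb2 : Real.sqrt (1 + (q * Real.exp x) ^ 2) ^ 2 = 1 + (q * Real.exp x) ^ 2 :=
    Real.sq_sqrt (by positivity)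
  -- derivatives of basic pieces
  have hyd : HasDerivAt (fun t => p * Real.exp t) (p * Real.exp x) x :=
    (Real.hasDerivAt_exp x).const_mul p
  have hzd : HasDerivAt (fun t => q * Real.exp t) (q * Real.exp x) x :=
    (Real.hasDerivAt_exp x).const_mul q
  have hrad : HasDerivAt (fun t => Real.sqrt (1 + (p * Real.exp t) ^ 2))
      ((p * Real.exp x) ^ 2 * Real.sqrt (1 + (p * Real.exp x) ^ 2) / (1 + (p * Real.exp x) ^ 2)) x := by
    have h1 : HasDerivAt (fun t => 1 + (p * Real.exp t) ^ 2)
        (2 * (p * Real.exp x) * (p * Real.exp x)) x := by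
      have := (hyd.pow 2).const_add 1
      refine this.congr_deriv ?_
      first
      | (simp; ring)
      | simp
      | ring
    have h2 := h1.sqrt (by positivity)
    convert h2 using 1
    rw [div_eq_div_iff (by positivity) (by positivity)]
    linear_combination (2 * (p * Real.exp x) ^ 2) * hra2
  have hrbd : HasDerivAt (fun t => Real.sqrt (1 + (q * Real.exp t) ^ 2))
      ((q * Real.exp x) ^ 2 * Real.sqrt (1 + (q * Real.exp x) ^ 2) / (1 + (q * Real.exp x) ^ 2)) x := by
    have h1 : HasDerivAt (fun t => 1 + (q * Real.exp t) ^ 2)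
        (2 * (q * Real.exp x) * (q * Real.exp x)) x := by
      have := (hzd.pow 2).const_add 1
      refine this.congr_deriv ?_
      first
      | (simp; ring)
      | simp
      | ring
    have h2 := h1.sqrt (by positivity)
    convert h2 using 1
    rw [div_eq_div_iff (by positivity) (by positivity)]
    linear_combination (2 * (q * Real.exp x) ^ 2) * hrb2
  -- numerator and denominator
  have hNd : HasDerivAt (fun t => (1 + 2 * (p * Real.exp t) ^ 2) * (1 + 2 * (q * Real.exp t) ^ 2) - W)
      ((4 * (p * Real.exp x) ^ 2) * (1 + 2 * (q * Real.exp x) ^ 2)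
        + (1 + 2 * (p * Real.exp x) ^ 2) * (4 * (q * Real.exp x) ^ 2)) x := by
    have h1 : HasDerivAt (fun t => 1 + 2 * (p * Real.exp t) ^ 2) (4 * (p * Real.exp x) ^ 2) x := by
      have := ((hyd.pow 2).const_mul 2).const_add 1
      refine this.congr_deriv ?_
      first
      | (simp; ring)
      | simp
      | ring
    have h2 : HasDerivAt (fun t => 1 + 2 * (q * Real.exp t) ^ 2) (4 * (q * Real.exp x) ^ 2) x := by
      have := ((hzd.pow 2).const_mul 2).const_add 1
      refine this.congr_deriv ?_
      first
      | (simp; ring)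
      | simp
      | ring
    have := (h1.mul h2).sub_const W
    exact this
  have hDad : HasDerivAt (fun t => 2 * (p * Real.exp t) * Real.sqrt (1 + (p * Real.exp t) ^ 2))
      (2 * (p * Real.exp x) * Real.sqrt (1 + (p * Real.exp x) ^ 2)
        + 2 * (p * Real.exp x) *
          ((p * Real.exp x) ^ 2 * Real.sqrt (1 + (p * Real.exp x) ^ 2) / (1 + (p * Real.exp x) ^ 2))) x := by
    have := (hyd.const_mul 2).mul hrad
    exact this
  have hDbd : HasDerivAt (fun t => 2 * (q * Real.exp t) * Real.sqrt (1 + (q * Real.exp t) ^ 2))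
      (2 * (q * Real.exp x) * Real.sqrt (1 + (q * Real.exp x) ^ 2)
        + 2 * (q * Real.exp x) *
          ((q * Real.exp x) ^ 2 * Real.sqrt (1 + (q * Real.exp x) ^ 2) / (1 + (q * Real.exp x) ^ 2))) x := by
    have := (hzd.const_mul 2).mul hrbd
    exact this
  have hD0 : (2 * (p * Real.exp x) * Real.sqrt (1 + (p * Real.exp x) ^ 2)) *
      (2 * (q * Real.exp x) * Real.sqrt (1 + (q * Real.exp x) ^ 2)) ≠ 0 := by positivity
  have hGd : HasDerivAt (fun t => cosAng (p * Real.exp t) (q * Real.exp t) W) _ x := hNd.div (hDad.mul hDbd) hD0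
  -- the key positivity
  have hstar : 0 < ((4 * (p * Real.exp x) ^ 2) * (1 + 2 * (q * Real.exp x) ^ 2)
        + (1 + 2 * (p * Real.exp x) ^ 2) * (4 * (q * Real.exp x) ^ 2))
        * ((1 + (p * Real.exp x) ^ 2) * (1 + (q * Real.exp x) ^ 2))
      - ((1 + 2 * (p * Real.exp x) ^ 2) * (1 + 2 * (q * Real.exp x) ^ 2) - W)
        * (2 * ((1 + (p * Real.exp x) ^ 2) * (1 + (q * Real.exp x) ^ 2))
          + (p * Real.exp x) ^ 2 * (1 + (q * Real.exp x) ^ 2)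
          + (q * Real.exp x) ^ 2 * (1 + (p * Real.exp x) ^ 2)) := by
    have hs : (0:ℝ) < 4 * (p * Real.exp x) * (q * Real.exp x) *
        Real.sqrt (1 + (p * Real.exp x) ^ 2) * Real.sqrt (1 + (q * Real.exp x) ^ 2) := by positivity
    have hs2 : (4 * (p * Real.exp x) * (q * Real.exp x) *
        Real.sqrt (1 + (p * Real.exp x) ^ 2) * Real.sqrt (1 + (q * Real.exp x) ^ 2)) ^ 2
        = ((1 + 2 * (p * Real.exp x) ^ 2) ^ 2 - 1) * ((1 + 2 * (q * Real.exp x) ^ 2) ^ 2 - 1) := by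
      linear_combination (16 * (p * Real.exp x) ^ 2 * (q * Real.exp x) ^ 2 *
          Real.sqrt (1 + (q * Real.exp x) ^ 2) ^ 2) * hra2
        + (16 * (p * Real.exp x) ^ 2 * (q * Real.exp x) ^ 2 * (1 + (p * Real.exp x) ^ 2)) * hrb2
    have hkey := key_ineq (1 + 2 * (p * Real.exp x) ^ 2) (1 + 2 * (q * Real.exp x) ^ 2) W
      (4 * (p * Real.exp x) * (q * Real.exp x) *
        Real.sqrt (1 + (p * Real.exp x) ^ 2) * Real.sqrt (1 + (q * Real.exp x) ^ 2))
      (by nlinarith) (by nlinarith) hW1 hs hs2 (by nlinarith [htri])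
    nlinarith [hkey]
  -- assemble
  have hsq1 : cosAng (p * Real.exp x) (q * Real.exp x) W ≠ 1 := by
    intro h; rw [h] at hsq; norm_num at hsq
  have hsqm1 : cosAng (p * Real.exp x) (q * Real.exp x) W ≠ -1 := by
    intro h; rw [h] at hsq; norm_num at hsq
  obtain ⟨v, hv, hvneg⟩ : ∃ v,
      HasDerivAt (fun t => Real.arccos (cosAng (p * Real.exp t) (q * Real.exp t) W)) v x ∧ v < 0 := by
    refine ⟨_, (Real.hasDerivAt_arccos hsqm1 hsq1).comp (h₂ := Real.arccos) x hGd, ?_⟩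
    apply mul_neg_of_neg_of_pos
    · have h1 : (0:ℝ) < Real.sqrt (1 - cosAng (p * Real.exp x) (q * Real.exp x) W ^ 2) :=
        Real.sqrt_pos.2 (by nlinarith)
      have : (0:ℝ) < 1 / Real.sqrt (1 - cosAng (p * Real.exp x) (q * Real.exp x) W ^ 2) := by
        positivity
      linarith
    · apply div_pos
      · have h4 : (0:ℝ) < 4 * (p * Real.exp x) * (q * Real.exp x) *
            Real.sqrt (1 + (p * Real.exp x) ^ 2) * Real.sqrt (1 + (q * Real.exp x) ^ 2) := by
          positivity
        have hden : (0:ℝ) < (1 + (p * Real.exp x) ^ 2) * (1 + (q * Real.exp x) ^ 2) := by positivity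
        refine lt_of_lt_of_eq (div_pos (mul_pos h4 hstar) hden) ?_
        field_simp
        ring
      · positivity
  rw [hv.deriv]
  exact hvneg

lemma vsLen_pos {d : ℝ} (hd : 0 < d) (r s : ℝ) : 0 < vsLen d r s := by
  have h : 0 < Real.sinh (d / 2) * Real.exp (r + s) :=
    mul_pos (Real.sinh_pos_iff.2 (by linarith)) (Real.exp_pos _)
  have := Real.arsinh_pos_iff.2 h
  unfold vsLen; linarith

lemma cosh_vsLen (d r s : ℝ) :
    Real.cosh (vsLen d r s) = 1 + 2 * (Real.sinh (d / 2) * Real.exp (r + s)) ^ 2 := by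
  unfold vsLen
  rw [Real.cosh_two_mul, Real.cosh_arsinh, Real.sinh_arsinh,
    Real.sq_sqrt (by positivity)]
  ring

lemma sinh_vsLen (d r s : ℝ) :
    Real.sinh (vsLen d r s) = 2 * (Real.sinh (d / 2) * Real.exp (r + s)) *
      Real.sqrt (1 + (Real.sinh (d / 2) * Real.exp (r + s)) ^ 2) := by
  unfold vsLen
  rw [Real.sinh_two_mul, Real.sinh_arsinh, Real.cosh_arsinh]

/-- In the vertex-scaling setup, the partial derivative of the angle `αi`
(opposite the edge `{jk}`) with respect to `uj` equals
`(1/cosh²(lij/2))·tan((αi+αj−αk)/2)`. -/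
theorem stmt5 (dij dik djk : ℝ) (hdij : 0 < dij) (hdik : 0 < dik) (hdjk : 0 < djk)
    (αi αj αk : ℝ → ℝ → ℝ → ℝ)
    (hang : ∀ ui uj uk, vsAdm dij dik djk ui uj uk →
      αi ui uj uk ∈ Set.Ioo 0 π ∧ αj ui uj uk ∈ Set.Ioo 0 π ∧ αk ui uj uk ∈ Set.Ioo 0 π ∧
      Real.cos (αi ui uj uk) =
        (Real.cosh (vsLen dij ui uj) * Real.cosh (vsLen dik ui uk)
            - Real.cosh (vsLen djk uj uk)) /
          (Real.sinh (vsLen dij ui uj) * Real.sinh (vsLen dik ui uk)) ∧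
      Real.cos (αj ui uj uk) =
        (Real.cosh (vsLen dij ui uj) * Real.cosh (vsLen djk uj uk)
            - Real.cosh (vsLen dik ui uk)) /
          (Real.sinh (vsLen dij ui uj) * Real.sinh (vsLen djk uj uk)) ∧
      Real.cos (αk ui uj uk) =
        (Real.cosh (vsLen dik ui uk) * Real.cosh (vsLen djk uj uk)
            - Real.cosh (vsLen dij ui uj)) /
          (Real.sinh (vsLen dik ui uk) * Real.sinh (vsLen djk uj uk)))
    (ui uj uk : ℝ) (hadm : vsAdm dij dik djk ui uj uk) :
    deriv (fun t => αi t uj uk) ui < 0 := by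
  have hp : 0 < Real.sinh (dij / 2) * Real.exp uj :=
    mul_pos (Real.sinh_pos_iff.2 (by linarith)) (Real.exp_pos _)
  have hq : 0 < Real.sinh (dik / 2) * Real.exp uk :=
    mul_pos (Real.sinh_pos_iff.2 (by linarith)) (Real.exp_pos _)
  have harg1 : ∀ t : ℝ, Real.sinh (dij / 2) * Real.exp (t + uj)
      = Real.sinh (dij / 2) * Real.exp uj * Real.exp t := by
    intro t; rw [Real.exp_add]; ring
  have harg2 : ∀ t : ℝ, Real.sinh (dik / 2) * Real.exp (t + uk)
      = Real.sinh (dik / 2) * Real.exp uk * Real.exp t := by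
    intro t; rw [Real.exp_add]; ring
  have hcosAng : ∀ t : ℝ,
      (Real.cosh (vsLen dij t uj) * Real.cosh (vsLen dik t uk) - Real.cosh (vsLen djk uj uk)) /
        (Real.sinh (vsLen dij t uj) * Real.sinh (vsLen dik t uk))
      = cosAng (Real.sinh (dij / 2) * Real.exp uj * Real.exp t)
          (Real.sinh (dik / 2) * Real.exp uk * Real.exp t) (Real.cosh (vsLen djk uj uk)) := by
    intro t
    rw [cosh_vsLen dij t uj, cosh_vsLen dik t uk, sinh_vsLen dij t uj, sinh_vsLen dik t uk,
      harg1 t, harg2 t]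
    rfl
  have hcont : ∀ d u : ℝ, Continuous fun t : ℝ => vsLen d t u := by
    intro d u; unfold vsLen
    exact continuous_const.mul (Real.continuous_arsinh.comp
      (continuous_const.mul (Real.continuous_exp.comp (continuous_id.add continuous_const))))
  have hopen : IsOpen {t : ℝ | vsAdm dij dik djk t uj uk} := by
    have h1 : IsOpen {t : ℝ | vsLen djk uj uk < vsLen dik t uk + vsLen dij t uj} :=
      isOpen_lt continuous_const ((hcont dik uk).add (hcont dij uj))
    have h2 : IsOpen {t : ℝ | vsLen dik t uk < vsLen djk uj uk + vsLen dij t uj} :=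
      isOpen_lt (hcont dik uk) (continuous_const.add (hcont dij uj))
    have h3 : IsOpen {t : ℝ | vsLen dij t uj < vsLen djk uj uk + vsLen dik t uk} :=
      isOpen_lt (hcont dij uj) (continuous_const.add (hcont dik uk))
    exact h1.inter (h2.inter h3)
  have hnhds : {t : ℝ | vsAdm dij dik djk t uj uk} ∈ nhds ui := hopen.mem_nhds hadm
  have heq : (fun t => αi t uj uk) =ᶠ[nhds ui] fun t =>
      Real.arccos (cosAng (Real.sinh (dij / 2) * Real.exp uj * Real.exp t)
        (Real.sinh (dik / 2) * Real.exp uk * Real.exp t) (Real.cosh (vsLen djk uj uk))) := by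
    filter_upwards [hnhds] with t ht
    obtain ⟨hio, -, -, hcos, -, -⟩ := hang t uj uk ht
    rw [← hcosAng t, ← hcos, Real.arccos_cos hio.1.le hio.2.le]
  rw [heq.deriv_eq]
  -- the hypotheses of `core`
  have hW1 : (1:ℝ) ≤ Real.cosh (vsLen djk uj uk) := Real.one_le_cosh _
  have habs : |vsLen dij ui uj - vsLen dik ui uk| < vsLen djk uj uk := by
    rw [abs_sub_lt_iff]
    exact ⟨by linarith [hadm.2.2], by linarith [hadm.2.1]⟩
  have hcc : Real.cosh (vsLen dij ui uj - vsLen dik ui uk) < Real.cosh (vsLen djk uj uk) := by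
    rw [Real.cosh_lt_cosh, abs_of_pos (vsLen_pos hdjk uj uk)]
    exact habs
  rw [Real.cosh_sub, cosh_vsLen dij ui uj, cosh_vsLen dik ui uk, sinh_vsLen dij ui uj,
    sinh_vsLen dik ui uk, harg1 ui, harg2 ui] at hcc
  obtain ⟨hio, -, -, hcos, -, -⟩ := hang ui uj uk hadm
  have hformula : cosAng (Real.sinh (dij / 2) * Real.exp uj * Real.exp ui)
      (Real.sinh (dik / 2) * Real.exp uk * Real.exp ui) (Real.cosh (vsLen djk uj uk))
      = Real.cos (αi ui uj uk) := (hcosAng ui).symm.trans hcos.symm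
  have hsin : 0 < Real.sin (αi ui uj uk) := Real.sin_pos_of_pos_of_lt_pi hio.1 hio.2
  have hsq : (cosAng (Real.sinh (dij / 2) * Real.exp uj * Real.exp ui)
      (Real.sinh (dik / 2) * Real.exp uk * Real.exp ui) (Real.cosh (vsLen djk uj uk))) ^ 2 < 1 := by
    rw [hformula]
    nlinarith [Real.sin_sq_add_cos_sq (αi ui uj uk), hsin]
  exact core (Real.sinh (dij / 2) * Real.exp uj) (Real.sinh (dik / 2) * Real.exp uk)
    (Real.cosh (vsLen djk uj uk)) ui hp hq hW1 hcc hsq
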